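/- Let x, y be real numbers with x + y ≠ 0, let k, l ≥ 1 be integers, set m = max{k, l} + 1, and let u ∈ (0,1). Let (Φ_i)_{i=0}^{k−1} and (X_i)_{i=0}^{l−1} be martingales with respect to (F_i) with Φ_0 = 0, X_0 = 0, whose increments satisfy almost surely |Φ_i − Φ_{i−1}| ≤ K_x·u·(1+u)^{i−1} and |X_i − X_{i−1}| ≤ K_y·u·(1+u)^{i−1} for constants K_x, K_y ≥ 1. Let δ be a mean-independent rounding error at time m−1, let Φ = Φ_{k−1}, X = X_{l−1}, and let Ψ = (1 + (x/(x+y))·Φ + (y/(x+y))·X)(1 + δ) − 1 (the relative error of the computed sum ẑ of x(1+Φ) and y(1+X) under stochastic rounding, ẑ = (x+y)(1+Ψ)). Set K_z = (|x|·K_x + |y|·K_y)/|x+y|. Then for every λ ∈ (0,1), with probability at least 1 − λ, |Ψ| ≤ K_z·√(u·γ_{2(m−1)}(u))·√(ln(2/λ)). -/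

import Mathlib

open MeasureTheory

lemma aux_int_of_bdd {Ω : Type*} {m0 : MeasurableSpace Ω} {μ : Measure Ω} [IsFiniteMeasure μ]
    {f : Ω → ℝ} (hf : AEStronglyMeasurable f μ) {C : ℝ} (h : ∀ᵐ ω ∂μ, |f ω| ≤ C) :
    Integrable f μ := by
  refine Integrable.mono' (integrable_const C) hf ?_
  simpa [Real.norm_eq_abs] using h

lemma aux_exp_le_cosh_add {c z : ℝ} (hc : 0 < c) (hz : |z| ≤ c) :
    Real.exp z ≤ Real.cosh c + (z / c) * Real.sinh c := by
  obtain ⟨h1, h2⟩ := abs_le.mp hz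
  set θ : ℝ := (z + c) / (2 * c) with hθ
  have hθ0 : (0:ℝ) ≤ θ := div_nonneg (by linarith) (by linarith)
  have hθ1 : θ ≤ 1 := by
    rw [hθ, div_le_one (by linarith)]; linarith
  have key : Real.exp (θ • c + (1 - θ) • (-c)) ≤ θ • Real.exp c + (1 - θ) • Real.exp (-c) :=
    convexOn_exp.2 (Set.mem_univ c) (Set.mem_univ (-c)) hθ0 (by linarith) (by ring)
  have harg : θ • c + (1 - θ) • (-c) = z := by
    simp only [smul_eq_mul, hθ]
    field_simp
    ring
  rw [harg] at key
  refine key.trans (le_of_eq ?_)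
  simp only [smul_eq_mul, hθ]
  rw [Real.cosh_eq, Real.sinh_eq]
  field_simp
  ring

lemma aux_gsum (r : ℝ) (j : ℕ) : ∑ i ∈ Finset.Icc 1 j, r ^ (i - 1) = ∑ i ∈ Finset.range j, r ^ i := by
  induction j with
  | zero => simp
  | succ n ih =>
    rw [Finset.sum_Icc_succ_top (Nat.one_le_iff_ne_zero.mpr (Nat.succ_ne_zero n)), ih,
      Finset.sum_range_succ]
    simp

lemma aux_bdd {Ω : Type*} {m0 : MeasurableSpace Ω} {μ : Measure Ω}
    (M : ℕ → Ω → ℝ) (c : ℕ → ℝ) (n : ℕ)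
    (h0 : ∀ ω, M 0 ω = 0)
    (hstep : ∀ i, 1 ≤ i → i ≤ n → ∀ᵐ ω ∂μ, |M i ω - M (i - 1) ω| ≤ c i) :
    ∀ᵐ ω ∂μ, |M n ω| ≤ ∑ i ∈ Finset.Icc 1 n, c i := by
  induction n with
  | zero => simp [h0]
  | succ n ih =>
    have ih' := ih (fun i h1 h2 => hstep i h1 (h2.trans (Nat.le_succ n)))
    filter_upwards [ih', hstep (n + 1) (Nat.le_add_left 1 n) le_rfl] with ω h1 h2
    rw [Finset.sum_Icc_succ_top (Nat.le_add_left 1 n)]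
    have : |M (n + 1) ω| ≤ |M n ω| + |M (n + 1) ω - M n ω| := by
      calc |M (n + 1) ω| = |M n ω + (M (n + 1) ω - M n ω)| := by ring_nf
        _ ≤ _ := abs_add_le _ _
    simp only [Nat.add_sub_cancel] at h2
    linarith

lemma aux_mgf_step {Ω : Type*} {m0 : MeasurableSpace Ω} {μ : Measure Ω} [IsProbabilityMeasure μ]
    {m : MeasurableSpace Ω} (hm : m ≤ m0) {f g : Ω → ℝ} {A c : ℝ} (hc : 0 < c)
    (hfm : StronglyMeasurable[m] f) (hfA : ∀ᵐ ω ∂μ, |f ω| ≤ A)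
    (hgm : AEStronglyMeasurable[m0] g μ) (hgc : ∀ᵐ ω ∂μ, |g ω| ≤ c)
    (hg0 : μ[g|m] =ᵐ[μ] 0) :
    ∫ ω, Real.exp (f ω + g ω) ∂μ ≤ (∫ ω, Real.exp (f ω) ∂μ) * Real.exp (c ^ 2 / 2) := by
  have hefm : StronglyMeasurable[m] fun ω => Real.exp (f ω) :=
    Real.continuous_exp.comp_stronglyMeasurable hfm
  have hefm0 : AEStronglyMeasurable[m0] (fun ω => Real.exp (f ω)) μ :=
    (hefm.mono hm).aestronglyMeasurable
  have hef : Integrable (fun ω => Real.exp (f ω)) μ := by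
    refine aux_int_of_bdd hefm0 (C := Real.exp A) ?_
    filter_upwards [hfA] with ω h
    rw [abs_of_pos (Real.exp_pos _)]
    exact Real.exp_le_exp.mpr ((le_abs_self _).trans h)
  have hgint : Integrable g μ := aux_int_of_bdd hgm hgc
  have heg : Integrable (fun ω => Real.exp (f ω) * g ω) μ := by
    refine aux_int_of_bdd (hefm0.mul hgm) (C := Real.exp A * c) ?_
    filter_upwards [hfA, hgc] with ω h1 h2
    rw [abs_mul, abs_of_pos (Real.exp_pos _)]
    exact mul_le_mul (Real.exp_le_exp.mpr ((le_abs_self _).trans h1)) h2 (abs_nonneg _)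
      (Real.exp_pos _).le
  have hexpadd : (fun ω => Real.exp (f ω + g ω)) = fun ω => Real.exp (f ω) * Real.exp (g ω) := by
    funext ω; rw [Real.exp_add]
  have hefg : Integrable (fun ω => Real.exp (f ω + g ω)) μ := by
    rw [hexpadd]
    refine aux_int_of_bdd (hefm0.mul (Real.continuous_exp.comp_aestronglyMeasurable hgm))
      (C := Real.exp A * Real.exp c) ?_
    filter_upwards [hfA, hgc] with ω h1 h2
    rw [abs_mul, abs_of_pos (Real.exp_pos _), abs_of_pos (Real.exp_pos _)]
    exact mul_le_mul (Real.exp_le_exp.mpr ((le_abs_self _).trans h1))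
      (Real.exp_le_exp.mpr ((le_abs_self _).trans h2)) (Real.exp_pos _).le (Real.exp_pos _).le
  have hzero : ∫ ω, Real.exp (f ω) * g ω ∂μ = 0 := by
    have hpull : μ[(fun ω => Real.exp (f ω)) * g | m]
        =ᵐ[μ] (fun ω => Real.exp (f ω)) * μ[g | m] :=
      condExp_mul_of_stronglyMeasurable_left hefm heg hgint
    have h1 : ∫ ω, Real.exp (f ω) * g ω ∂μ
        = ∫ ω, ((fun ω => Real.exp (f ω)) * μ[g | m]) ω ∂μ := by
      rw [← integral_condExp hm (μ := μ) (f := fun ω => Real.exp (f ω) * g ω)]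
      exact integral_congr_ae hpull
    rw [h1]
    have h2 : ((fun ω => Real.exp (f ω)) * μ[g | m]) =ᵐ[μ] 0 := by
      filter_upwards [hg0] with ω h
      simp [h]
    rw [integral_congr_ae h2]
    simp
  have hpt : ∀ᵐ ω ∂μ, Real.exp (f ω + g ω)
      ≤ Real.cosh c * Real.exp (f ω) + (Real.sinh c / c) * (Real.exp (f ω) * g ω) := by
    filter_upwards [hgc] with ω h
    rw [Real.exp_add]
    have := mul_le_mul_of_nonneg_left (aux_exp_le_cosh_add hc h) (Real.exp_pos (f ω)).le
    calc Real.exp (f ω) * Real.exp (g ω)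
        ≤ Real.exp (f ω) * (Real.cosh c + g ω / c * Real.sinh c) := this
      _ = Real.cosh c * Real.exp (f ω) + (Real.sinh c / c) * (Real.exp (f ω) * g ω) := by ring
  have hint : ∫ ω, Real.exp (f ω + g ω) ∂μ
      ≤ ∫ ω, (Real.cosh c * Real.exp (f ω) + (Real.sinh c / c) * (Real.exp (f ω) * g ω)) ∂μ :=
    integral_mono_ae hefg ((hef.const_mul _).add (heg.const_mul _)) hpt
  rw [integral_add (hef.const_mul _) (heg.const_mul _), integral_const_mul, integral_const_mul,
    hzero, mul_zero, add_zero] at hint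
  refine hint.trans ?_
  calc Real.cosh c * ∫ ω, Real.exp (f ω) ∂μ
      ≤ Real.exp (c ^ 2 / 2) * ∫ ω, Real.exp (f ω) ∂μ :=
        mul_le_mul_of_nonneg_right (Real.cosh_le_exp_half_sq c)
          (integral_nonneg fun ω => (Real.exp_pos _).le)
    _ = _ := mul_comm _ _

lemma aux_azuma_mgf {Ω : Type*} {m0 : MeasurableSpace Ω} {μ : Measure Ω} [IsProbabilityMeasure μ]
    (F : Filtration ℕ m0) (M : ℕ → Ω → ℝ) (c : ℕ → ℝ) (n : ℕ)
    (h0 : ∀ ω, M 0 ω = 0)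
    (hc : ∀ i, 1 ≤ i → i ≤ n → 0 < c i)
    (hmeas : ∀ i ≤ n, StronglyMeasurable[F i] (M i))
    (hstep : ∀ i, 1 ≤ i → i ≤ n → ∀ᵐ ω ∂μ, |M i ω - M (i - 1) ω| ≤ c i)
    (hmart : ∀ i, 1 ≤ i → i ≤ n →
      μ[(fun ω => M i ω - M (i - 1) ω) | F (i - 1)] =ᵐ[μ] 0) :
    ∫ ω, Real.exp (M n ω) ∂μ ≤ Real.exp ((∑ i ∈ Finset.Icc 1 n, c i ^ 2) / 2) := by
  induction n with
  | zero => simp [h0]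
  | succ n ih =>
    have hle : n ≤ n + 1 := Nat.le_succ n
    have ih' := ih (fun i h1 h2 => hc i h1 (h2.trans hle))
      (fun i h2 => hmeas i (h2.trans hle))
      (fun i h1 h2 => hstep i h1 (h2.trans hle))
      (fun i h1 h2 => hmart i h1 (h2.trans hle))
    have hA : ∀ᵐ ω ∂μ, |M n ω| ≤ ∑ i ∈ Finset.Icc 1 n, c i :=
      aux_bdd M c n h0 (fun i h1 h2 => hstep i h1 (h2.trans hle))
    have hgm : AEStronglyMeasurable (fun ω => M (n + 1) ω - M n ω) μ :=
      (((hmeas (n + 1) le_rfl).mono (F.le _)).sub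
        ((hmeas n hle).mono (F.le _))).aestronglyMeasurable
    have hgc : ∀ᵐ ω ∂μ, |M (n + 1) ω - M n ω| ≤ c (n + 1) := by
      simpa using hstep (n + 1) (Nat.le_add_left 1 n) le_rfl
    have hg0 : μ[(fun ω => M (n + 1) ω - M n ω) | F n] =ᵐ[μ] 0 := by
      simpa using hmart (n + 1) (Nat.le_add_left 1 n) le_rfl
    have key := aux_mgf_step (μ := μ) (F.le n) (hc (n + 1) (Nat.le_add_left 1 n) le_rfl)
      (hmeas n hle) hA hgm hgc hg0
    have heq : ∀ ω, M n ω + (M (n + 1) ω - M n ω) = M (n + 1) ω := fun ω => by ring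
    simp only [heq] at key
    refine key.trans ?_
    rw [Finset.sum_Icc_succ_top (Nat.le_add_left 1 n)]
    calc (∫ ω, Real.exp (M n ω) ∂μ) * Real.exp (c (n + 1) ^ 2 / 2)
        ≤ Real.exp ((∑ i ∈ Finset.Icc 1 n, c i ^ 2) / 2) * Real.exp (c (n + 1) ^ 2 / 2) :=
          mul_le_mul_of_nonneg_right ih' (Real.exp_pos _).le
      _ = _ := by rw [← Real.exp_add]; congr 1; ring

lemma aux_azuma_tail {Ω : Type*} {m0 : MeasurableSpace Ω} {μ : Measure Ω} [IsProbabilityMeasure μ]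
    (F : Filtration ℕ m0) (M : ℕ → Ω → ℝ) (c : ℕ → ℝ) (n : ℕ) (hn : 1 ≤ n)
    (h0 : ∀ ω, M 0 ω = 0)
    (hc : ∀ i, 1 ≤ i → i ≤ n → 0 < c i)
    (hmeas : ∀ i ≤ n, StronglyMeasurable[F i] (M i))
    (hstep : ∀ i, 1 ≤ i → i ≤ n → ∀ᵐ ω ∂μ, |M i ω - M (i - 1) ω| ≤ c i)
    (hmart : ∀ i, 1 ≤ i → i ≤ n →
      μ[(fun ω => M i ω - M (i - 1) ω) | F (i - 1)] =ᵐ[μ] 0)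
    {ε : ℝ} (hε : 0 < ε) :
    (μ {ω | ε ≤ M n ω}).toReal
      ≤ Real.exp (-ε ^ 2 / (2 * ∑ i ∈ Finset.Icc 1 n, c i ^ 2)) := by
  set V : ℝ := ∑ i ∈ Finset.Icc 1 n, c i ^ 2 with hV
  have hVpos : 0 < V := by
    refine Finset.sum_pos (fun i hi => ?_) (Finset.nonempty_Icc.mpr hn)
    rw [Finset.mem_Icc] at hi
    exact pow_pos (hc i hi.1 hi.2) 2
  set t : ℝ := ε / V with ht
  have htpos : 0 < t := div_pos hε hVpos
  -- apply azuma to the scaled process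
  have hmgf : ∫ ω, Real.exp (t * M n ω) ∂μ ≤ Real.exp (t ^ 2 * V / 2) := by
    have h := aux_azuma_mgf F (fun i ω => t * M i ω) (fun i => t * c i) n
      (fun ω => by simp [h0 ω])
      (fun i h1 h2 => mul_pos htpos (hc i h1 h2))
      (fun i h2 => (hmeas i h2).const_mul t)
      (fun i h1 h2 => by
        filter_upwards [hstep i h1 h2] with ω h
        calc |t * M i ω - t * M (i - 1) ω| = t * |M i ω - M (i - 1) ω| := by
              rw [← mul_sub, abs_mul, abs_of_pos htpos]
          _ ≤ t * c i := by exact mul_le_mul_of_nonneg_left h htpos.le)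
      (fun i h1 h2 => by
        have heqf : (fun ω => t * M i ω - t * M (i - 1) ω)
            = t • (fun ω => M i ω - M (i - 1) ω) := by
          funext ω; simp [smul_eq_mul]; ring
        rw [heqf]
        refine (condExp_smul t _ _).trans ?_
        filter_upwards [hmart i h1 h2] with ω h
        simp [h])
    refine h.trans (Real.exp_le_exp.mpr (le_of_eq ?_))
    rw [hV]
    rw [Finset.mul_sum]
    congr 1
    · refine Finset.sum_congr rfl fun i _ => by ring
  have hmeasn : AEStronglyMeasurable (fun ω => Real.exp (t * M n ω)) μ :=
    (Real.continuous_exp.comp_stronglyMeasurable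
      (((hmeas n le_rfl).mono (F.le n)).const_mul t)).aestronglyMeasurable
  have hAn := aux_bdd M c n h0 hstep
  have hintexp : Integrable (fun ω => Real.exp (t * M n ω)) μ := by
    refine aux_int_of_bdd hmeasn (C := Real.exp (t * ∑ i ∈ Finset.Icc 1 n, c i)) ?_
    filter_upwards [hAn] with ω h
    rw [abs_of_pos (Real.exp_pos _)]
    exact Real.exp_le_exp.mpr (mul_le_mul_of_nonneg_left ((le_abs_self _).trans h) htpos.le)
  have chern := ProbabilityTheory.measure_ge_le_exp_mul_mgf (X := M n) (μ := μ) ε htpos.le hintexp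
  rw [ProbabilityTheory.mgf] at chern
  refine chern.trans ?_
  have h2 : Real.exp (-t * ε) * ∫ ω, Real.exp (t * M n ω) ∂μ
      ≤ Real.exp (-t * ε) * Real.exp (t ^ 2 * V / 2) :=
    mul_le_mul_of_nonneg_left hmgf (Real.exp_pos _).le
  refine h2.trans (le_of_eq ?_)
  rw [← Real.exp_add]
  congr 1
  rw [ht]
  field_simp
  ring

set_option maxHeartbeats 2000000 in
/-- Addition case (Corollary 1): probabilistic bound for the relative error `Ψ` of the
computed sum `ẑ = (x+y)(1+Ψ)` under stochastic rounding, where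
`γ_N(u) = (1+u)^N - 1` and `K_z = (|x| K_x + |y| K_y)/|x+y|`. -/
theorem karatsuba_sr_addition_probabilistic_bound
    {Ω : Type*} {m0 : MeasurableSpace Ω} (μ : Measure Ω) [IsProbabilityMeasure μ]
    (F : Filtration ℕ m0)
    (x y : ℝ) (hxy : x + y ≠ 0)
    (k l : ℕ) (hk : 1 ≤ k) (hl : 1 ≤ l)
    (m : ℕ) (hm : m = max k l + 1)
    (u : ℝ) (hu0 : 0 < u) (hu1 : u < 1)
    (Φ X : ℕ → Ω → ℝ)
    (hΦ0 : ∀ ω, Φ 0 ω = 0) (hX0 : ∀ ω, X 0 ω = 0)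
    -- Φ is a martingale w.r.t. F on 0..k-1
    (hΦmeas : ∀ i ≤ k - 1, StronglyMeasurable[F i] (Φ i))
    (hΦint : ∀ i ≤ k - 1, Integrable (Φ i) μ)
    (hΦmart : ∀ i, 1 ≤ i → i ≤ k - 1 → μ[Φ i | F (i - 1)] =ᵐ[μ] Φ (i - 1))
    -- X is a martingale w.r.t. F on 0..l-1
    (hXmeas : ∀ i ≤ l - 1, StronglyMeasurable[F i] (X i))
    (hXint : ∀ i ≤ l - 1, Integrable (X i) μ)
    (hXmart : ∀ i, 1 ≤ i → i ≤ l - 1 → μ[X i | F (i - 1)] =ᵐ[μ] X (i - 1))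
    -- increment bounds
    (Kx Ky : ℝ) (hKx : 1 ≤ Kx) (hKy : 1 ≤ Ky)
    (hΦstep : ∀ i, 1 ≤ i → i ≤ k - 1 →
      ∀ᵐ ω ∂μ, |Φ i ω - Φ (i - 1) ω| ≤ Kx * u * (1 + u) ^ (i - 1))
    (hXstep : ∀ i, 1 ≤ i → i ≤ l - 1 →
      ∀ᵐ ω ∂μ, |X i ω - X (i - 1) ω| ≤ Ky * u * (1 + u) ^ (i - 1))
    -- δ is a mean-independent rounding error at time m-1
    (δ : Ω → ℝ)
    (hδmeas : StronglyMeasurable[F (m - 1)] δ)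
    (hδbdd : ∀ᵐ ω ∂μ, |δ ω| ≤ u)
    (hδmean : μ[δ | F (m - 2)] =ᵐ[μ] 0)
    -- relative error of the computed sum
    (Ψ : Ω → ℝ)
    (hΨ : ∀ ω, Ψ ω =
      (1 + x / (x + y) * Φ (k - 1) ω + y / (x + y) * X (l - 1) ω) * (1 + δ ω) - 1)
    (Kz : ℝ) (hKz : Kz = (|x| * Kx + |y| * Ky) / |x + y|)
    (lam : ℝ) (hlam0 : 0 < lam) (hlam1 : lam < 1) :
    ENNReal.ofReal (1 - lam) ≤
      μ {ω | |Ψ ω| ≤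
        Kz * Real.sqrt (u * ((1 + u) ^ (2 * (m - 1)) - 1)) * Real.sqrt (Real.log (2 / lam))} := by
  have habs : (0:ℝ) < |x + y| := abs_pos.mpr hxy
  have hKz1 : 1 ≤ Kz := by
    rw [hKz, le_div_iff₀ habs]
    have h1 : |x| + |y| ≤ |x| * Kx + |y| * Ky := by
      nlinarith [abs_nonneg x, abs_nonneg y]
    calc 1 * |x + y| = |x + y| := one_mul _
      _ ≤ |x| + |y| := abs_add_le x y
      _ ≤ _ := h1
  have hKzpos : (0:ℝ) < Kz := lt_of_lt_of_le one_pos hKz1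
  set n := max k l with hn
  have hn1 : 1 ≤ n := le_trans hk (le_max_left k l)
  have hm1 : m - 1 = n := by omega
  have hm2 : m - 2 = n - 1 := by omega
  have hk1n : k - 1 ≤ n - 1 := by omega
  have hl1n : l - 1 ≤ n - 1 := by omega
  have hu1' : (0:ℝ) < 1 + u := by linarith
  set a : ℝ := x / (x + y) with ha
  set b : ℝ := y / (x + y) with hb
  have hab : |a| * Kx + |b| * Ky = Kz := by
    rw [hKz, ha, hb, abs_div, abs_div]
    field_simp
  set c : ℕ → ℝ := fun i => Kz * u * (1 + u) ^ (i - 1) with hc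
  have hcpos : ∀ i, 0 < c i := fun i =>
    mul_pos (mul_pos hKzpos hu0) (pow_pos hu1' _)
  set M : ℕ → Ω → ℝ := fun i ω =>
    if i < n then a * Φ (min i (k - 1)) ω + b * X (min i (l - 1)) ω else Ψ ω with hM
  have h0 : ∀ ω, M 0 ω = 0 := by
    intro ω
    have hn0 : 0 < n := hn1
    simp [hM, hn0, hΦ0, hX0]
  have hmeasM : ∀ i ≤ n, StronglyMeasurable[F i] (M i) := by
    intro i hi
    by_cases h : i < n
    · simp only [hM, if_pos h]
      have h1 : StronglyMeasurable[F i] (Φ (min i (k - 1))) :=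
        (hΦmeas _ (min_le_right _ _)).mono (F.mono (min_le_left _ _))
      have h2 : StronglyMeasurable[F i] (X (min i (l - 1))) :=
        (hXmeas _ (min_le_right _ _)).mono (F.mono (min_le_left _ _))
      exact (stronglyMeasurable_const.mul h1).add (stronglyMeasurable_const.mul h2)
    · have hieq : i = n := by omega
      simp only [hM, if_neg h]
      have hΨeq : Ψ = fun ω =>
          (1 + a * Φ (k - 1) ω + b * X (l - 1) ω) * (1 + δ ω) - 1 := funext hΨ
      rw [hΨeq]
      have h1 : StronglyMeasurable[F i] (Φ (k - 1)) :=
        (hΦmeas (k - 1) le_rfl).mono (F.mono (by omega))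
      have h2 : StronglyMeasurable[F i] (X (l - 1)) :=
        (hXmeas (l - 1) le_rfl).mono (F.mono (by omega))
      have h3 : StronglyMeasurable[F i] δ := by
        have hmi : m - 1 = i := by omega
        rw [← hmi]; exact hδmeas
      exact (((stronglyMeasurable_const.add (stronglyMeasurable_const.mul h1)).add
        (stronglyMeasurable_const.mul h2)).mul
        (stronglyMeasurable_const.add h3)).sub stronglyMeasurable_const
  have hstep1 : ∀ i, 1 ≤ i → i ≤ n - 1 →
      ∀ᵐ ω ∂μ, |M i ω - M (i - 1) ω| ≤ c i := by
    intro i h1 h2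
    have hin : i < n := by omega
    have hin' : i - 1 < n := by omega
    have hP : ∀ᵐ ω ∂μ, |Φ (min i (k - 1)) ω - Φ (min (i - 1) (k - 1)) ω|
        ≤ Kx * u * (1 + u) ^ (i - 1) := by
      by_cases hik : i ≤ k - 1
      · rw [min_eq_left hik, min_eq_left (by omega)]
        exact hΦstep i h1 hik
      · rw [min_eq_right (by omega), min_eq_right (by omega)]
        filter_upwards with ω
        rw [sub_self, abs_zero]
        positivity
    have hQ : ∀ᵐ ω ∂μ, |X (min i (l - 1)) ω - X (min (i - 1) (l - 1)) ω|
        ≤ Ky * u * (1 + u) ^ (i - 1) := by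
      by_cases hil : i ≤ l - 1
      · rw [min_eq_left hil, min_eq_left (by omega)]
        exact hXstep i h1 hil
      · rw [min_eq_right (by omega), min_eq_right (by omega)]
        filter_upwards with ω
        rw [sub_self, abs_zero]
        positivity
    filter_upwards [hP, hQ] with ω p q
    simp only [hM, if_pos hin, if_pos hin']
    have e1 : a * Φ (min i (k - 1)) ω + b * X (min i (l - 1)) ω -
        (a * Φ (min (i - 1) (k - 1)) ω + b * X (min (i - 1) (l - 1)) ω)
        = a * (Φ (min i (k - 1)) ω - Φ (min (i - 1) (k - 1)) ω)
          + b * (X (min i (l - 1)) ω - X (min (i - 1) (l - 1)) ω) := by ring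
    rw [e1]
    calc |a * (Φ (min i (k - 1)) ω - Φ (min (i - 1) (k - 1)) ω)
          + b * (X (min i (l - 1)) ω - X (min (i - 1) (l - 1)) ω)|
        ≤ |a * (Φ (min i (k - 1)) ω - Φ (min (i - 1) (k - 1)) ω)|
          + |b * (X (min i (l - 1)) ω - X (min (i - 1) (l - 1)) ω)| := abs_add_le _ _
      _ = |a| * |Φ (min i (k - 1)) ω - Φ (min (i - 1) (k - 1)) ω|
          + |b| * |X (min i (l - 1)) ω - X (min (i - 1) (l - 1)) ω| := by
            rw [abs_mul, abs_mul]
      _ ≤ |a| * (Kx * u * (1 + u) ^ (i - 1)) + |b| * (Ky * u * (1 + u) ^ (i - 1)) :=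
            add_le_add (mul_le_mul_of_nonneg_left p (abs_nonneg a))
              (mul_le_mul_of_nonneg_left q (abs_nonneg b))
      _ = c i := by rw [hc, ← hab]; ring
  have hgeom : ∀ j : ℕ, ∑ i ∈ Finset.Icc 1 j, c i = Kz * ((1 + u) ^ j - 1) := by
    intro j
    have e1 : ∑ i ∈ Finset.Icc 1 j, c i = Kz * u * ∑ i ∈ Finset.Icc 1 j, (1 + u) ^ (i - 1) := by
      rw [Finset.mul_sum]
    rw [e1, aux_gsum, geom_sum_eq (by intro hcon; nlinarith [hcon] : (1:ℝ) + u ≠ 1)]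
    have : (1:ℝ) + u - 1 = u := by ring
    rw [this]
    field_simp
  have hSbnd : ∀ᵐ ω ∂μ, |M (n - 1) ω| ≤ Kz * ((1 + u) ^ (n - 1) - 1) := by
    have := aux_bdd (μ := μ) M c (n - 1) h0 (fun i a1 a2 => hstep1 i a1 a2)
    rw [hgeom (n - 1)] at this
    exact this
  have hstepfull : ∀ i, 1 ≤ i → i ≤ n →
      ∀ᵐ ω ∂μ, |M i ω - M (i - 1) ω| ≤ c i := by
    intro i h1 h2
    by_cases hin : i < n
    · exact hstep1 i h1 (by omega)
    · have hieq : i = n := by omega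
      subst hieq
      have hMn : ∀ ω, M n ω = Ψ ω := fun ω => by simp [hM]
      have hMn1 : ∀ ω, M (n - 1) ω
          = a * Φ (k - 1) ω + b * X (l - 1) ω := fun ω => by
        simp only [hM, if_pos (by omega : n - 1 < n), min_eq_right hk1n, min_eq_right hl1n]
      filter_upwards [hδbdd, hSbnd] with ω hd hs
      rw [hMn ω, hMn1 ω] at *
      have e1 : Ψ ω - (a * Φ (k - 1) ω + b * X (l - 1) ω)
          = δ ω * (1 + (a * Φ (k - 1) ω + b * X (l - 1) ω)) := by
        rw [hΨ ω]; ring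
      rw [e1, abs_mul]
      have h3 : |1 + (a * Φ (k - 1) ω + b * X (l - 1) ω)|
          ≤ 1 + Kz * ((1 + u) ^ (n - 1) - 1) := by
        calc |1 + (a * Φ (k - 1) ω + b * X (l - 1) ω)|
            ≤ |(1:ℝ)| + |a * Φ (k - 1) ω + b * X (l - 1) ω| := abs_add_le _ _
          _ ≤ 1 + Kz * ((1 + u) ^ (n - 1) - 1) := by
              rw [abs_one]; exact (add_le_add_iff_left 1).mpr hs
      have h4 := mul_le_mul hd h3 (abs_nonneg _) hu0.le
      refine h4.trans ?_
      have hpow : (1:ℝ) ≤ (1 + u) ^ (n - 1) := one_le_pow₀ (by linarith)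
      show u * (1 + Kz * ((1 + u) ^ (n - 1) - 1)) ≤ Kz * u * (1 + u) ^ (n - 1)
      nlinarith [hpow, hKz1, hu0, mul_nonneg hu0.le (sub_nonneg.mpr hKz1)]
  have hmartM : ∀ i, 1 ≤ i → i ≤ n →
      μ[(fun ω => M i ω - M (i - 1) ω) | F (i - 1)] =ᵐ[μ] 0 := by
    intro i h1 h2
    by_cases hin : i < n
    · have hin' : i - 1 < n := by omega
      have hP0 : μ[(fun ω => Φ (min i (k - 1)) ω - Φ (min (i - 1) (k - 1)) ω)
          | F (i - 1)] =ᵐ[μ] 0 := by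
        by_cases hik : i ≤ k - 1
        · rw [min_eq_left hik, min_eq_left (by omega)]
          have hsub : μ[(fun ω => Φ i ω - Φ (i - 1) ω) | F (i - 1)]
              =ᵐ[μ] μ[Φ i | F (i - 1)] - μ[Φ (i - 1) | F (i - 1)] :=
            condExp_sub (hΦint i hik) (hΦint (i - 1) (by omega)) _
          have heq : μ[Φ (i - 1) | F (i - 1)] = Φ (i - 1) :=
            condExp_of_stronglyMeasurable (F.le (i - 1))
              (hΦmeas (i - 1) (by omega)) (hΦint (i - 1) (by omega))
          filter_upwards [hsub, hΦmart i h1 hik] with ω e1 e2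
          rw [e1, Pi.sub_apply, heq, e2, Pi.zero_apply, sub_self]
        · have hz : (fun ω => Φ (min i (k - 1)) ω - Φ (min (i - 1) (k - 1)) ω)
              = (0 : Ω → ℝ) := by
            funext ω
            rw [min_eq_right (by omega), min_eq_right (by omega), sub_self, Pi.zero_apply]
          rw [hz, condExp_zero]
      have hQ0 : μ[(fun ω => X (min i (l - 1)) ω - X (min (i - 1) (l - 1)) ω)
          | F (i - 1)] =ᵐ[μ] 0 := by
        by_cases hil : i ≤ l - 1
        · rw [min_eq_left hil, min_eq_left (by omega)]
          have hsub : μ[(fun ω => X i ω - X (i - 1) ω) | F (i - 1)]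
              =ᵐ[μ] μ[X i | F (i - 1)] - μ[X (i - 1) | F (i - 1)] :=
            condExp_sub (hXint i hil) (hXint (i - 1) (by omega)) _
          have heq : μ[X (i - 1) | F (i - 1)] = X (i - 1) :=
            condExp_of_stronglyMeasurable (F.le (i - 1))
              (hXmeas (i - 1) (by omega)) (hXint (i - 1) (by omega))
          filter_upwards [hsub, hXmart i h1 hil] with ω e1 e2
          rw [e1, Pi.sub_apply, heq, e2, Pi.zero_apply, sub_self]
        · have hz : (fun ω => X (min i (l - 1)) ω - X (min (i - 1) (l - 1)) ω)
              = (0 : Ω → ℝ) := by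
            funext ω
            rw [min_eq_right (by omega), min_eq_right (by omega), sub_self, Pi.zero_apply]
          rw [hz, condExp_zero]
      have e : (fun ω => M i ω - M (i - 1) ω)
          = a • (fun ω => Φ (min i (k - 1)) ω - Φ (min (i - 1) (k - 1)) ω)
            + b • (fun ω => X (min i (l - 1)) ω - X (min (i - 1) (l - 1)) ω) := by
        funext ω
        simp only [hM, if_pos hin, if_pos hin', Pi.add_apply, Pi.smul_apply, smul_eq_mul]
        ring
      rw [e]
      have hPint : Integrable (fun ω => Φ (min i (k - 1)) ω - Φ (min (i - 1) (k - 1)) ω) μ :=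
        (hΦint _ (min_le_right _ _)).sub (hΦint _ (min_le_right _ _))
      have hQint : Integrable (fun ω => X (min i (l - 1)) ω - X (min (i - 1) (l - 1)) ω) μ :=
        (hXint _ (min_le_right _ _)).sub (hXint _ (min_le_right _ _))
      have hadd := condExp_add (μ := μ) (m := F (i - 1)) (hPint.smul a) (hQint.smul b)
      refine hadd.trans ?_
      have hsm1 := condExp_smul (μ := μ) (m := F (i - 1)) a
        (fun ω => Φ (min i (k - 1)) ω - Φ (min (i - 1) (k - 1)) ω)
      have hsm2 := condExp_smul (μ := μ) (m := F (i - 1)) b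
        (fun ω => X (min i (l - 1)) ω - X (min (i - 1) (l - 1)) ω)
      filter_upwards [hsm1, hsm2, hP0, hQ0] with ω e1 e2 p q
      rw [Pi.add_apply, e1, e2, Pi.smul_apply, Pi.smul_apply, p, q]
      simp
    · have hieq : i = n := by omega
      subst hieq
      have e : (fun ω => M n ω - M (n - 1) ω)
          = (fun ω => 1 + (a * Φ (k - 1) ω + b * X (l - 1) ω)) * δ := by
        funext ω
        simp only [hM, if_neg (lt_irrefl n), if_pos (by omega : n - 1 < n),
          min_eq_right hk1n, min_eq_right hl1n, Pi.mul_apply]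
        rw [hΨ ω]
        ring
      rw [e]
      have hSm : StronglyMeasurable[F (n - 1)]
          (fun ω => 1 + (a * Φ (k - 1) ω + b * X (l - 1) ω)) := by
        have hp1 : StronglyMeasurable[F (n - 1)] (Φ (k - 1)) :=
          (hΦmeas (k - 1) le_rfl).mono (F.mono hk1n)
        have hp2 : StronglyMeasurable[F (n - 1)] (X (l - 1)) :=
          (hXmeas (l - 1) le_rfl).mono (F.mono hl1n)
        exact stronglyMeasurable_const.add
          ((stronglyMeasurable_const.mul hp1).add (stronglyMeasurable_const.mul hp2))
      have hδint : Integrable δ μ :=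
        aux_int_of_bdd (((hm1 ▸ hδmeas : StronglyMeasurable[F n] δ).mono
          (F.le n)).aestronglyMeasurable) hδbdd
      have hfgint : Integrable ((fun ω => 1 + (a * Φ (k - 1) ω + b * X (l - 1) ω)) * δ) μ := by
        refine aux_int_of_bdd ?_ (C := (1 + Kz * ((1 + u) ^ (n - 1) - 1)) * u) ?_
        · exact ((hSm.mono (F.le _)).mul ((hm1 ▸ hδmeas : StronglyMeasurable[F n] δ).mono
            (F.le n))).aestronglyMeasurable
        · have hMn1 : ∀ ω, M (n - 1) ω
              = a * Φ (k - 1) ω + b * X (l - 1) ω := fun ω => by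
            simp only [hM, if_pos (by omega : n - 1 < n), min_eq_right hk1n, min_eq_right hl1n]
          filter_upwards [hδbdd, hSbnd] with ω hd hs
          rw [hMn1 ω] at hs
          rw [Pi.mul_apply, abs_mul]
          refine mul_le_mul ?_ hd (abs_nonneg _) ?_
          · calc |1 + (a * Φ (k - 1) ω + b * X (l - 1) ω)|
                ≤ |(1:ℝ)| + |a * Φ (k - 1) ω + b * X (l - 1) ω| := abs_add_le _ _
              _ ≤ 1 + Kz * ((1 + u) ^ (n - 1) - 1) := by
                  rw [abs_one]; exact (add_le_add_iff_left 1).mpr hs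
          · have hpow : (1:ℝ) ≤ (1 + u) ^ (n - 1) := one_le_pow₀ (by linarith)
            nlinarith [hKz1]
      have hpull := condExp_mul_of_stronglyMeasurable_left hSm hfgint hδint
      refine hpull.trans ?_
      have hδm : μ[δ | F (n - 1)] =ᵐ[μ] 0 := hm2 ▸ hδmean
      filter_upwards [hδm] with ω e2
      rw [Pi.mul_apply, e2, Pi.zero_apply, mul_zero]
  -- the two tails
  set γ : ℝ := (1 + u) ^ (2 * n) - 1 with hγdef
  have hγpos : 0 < γ := by
    have h1 : (1:ℝ) < (1 + u) ^ (2 * n) :=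
      one_lt_pow₀ (by linarith) (by omega)
    rw [hγdef]; linarith
  have hL : (0:ℝ) < Real.log (2 / lam) :=
    Real.log_pos ((one_lt_div hlam0).mpr (by linarith))
  set ε : ℝ := Kz * Real.sqrt (u * γ) * Real.sqrt (Real.log (2 / lam)) with hεdef
  have hεpos : 0 < ε :=
    mul_pos (mul_pos hKzpos (Real.sqrt_pos.mpr (mul_pos hu0 hγpos))) (Real.sqrt_pos.mpr hL)
  have hup := aux_azuma_tail F M c n hn1 h0 (fun i _ _ => hcpos i) hmeasM hstepfull hmartM hεpos
  have hlo := aux_azuma_tail F (fun i ω => -(M i ω)) c n hn1 (fun ω => by simp [h0 ω])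
    (fun i _ _ => hcpos i) (fun i hi => (hmeasM i hi).neg)
    (fun i h1 h2 => by
      filter_upwards [hstepfull i h1 h2] with ω h
      have e : -(M i ω) - -(M (i - 1) ω) = -(M i ω - M (i - 1) ω) := by ring
      rw [e, abs_neg]; exact h)
    (fun i h1 h2 => by
      have e : (fun ω => -(M i ω) - -(M (i - 1) ω))
          = (-1 : ℝ) • (fun ω => M i ω - M (i - 1) ω) := by
        funext ω; simp only [Pi.smul_apply, smul_eq_mul]; ring
      rw [e]
      refine (condExp_smul (-1 : ℝ) _ _).trans ?_
      filter_upwards [hmartM i h1 h2] with ω h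
      rw [Pi.smul_apply, h, Pi.zero_apply, smul_zero]) hεpos
  set V : ℝ := ∑ i ∈ Finset.Icc 1 n, c i ^ 2 with hVdef
  have hVpos : 0 < V :=
    Finset.sum_pos (fun i _ => pow_pos (hcpos i) 2) (Finset.nonempty_Icc.mpr hn1)
  have hVle : 2 * V ≤ Kz ^ 2 * (u * γ) := by
    have e1 : V = Kz ^ 2 * u ^ 2 * ∑ i ∈ Finset.Icc 1 n, ((1 + u) ^ 2) ^ (i - 1) := by
      rw [hVdef, Finset.mul_sum]
      refine Finset.sum_congr rfl fun i _ => ?_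
      show (Kz * u * (1 + u) ^ (i - 1)) ^ 2 = _
      rw [show ((1 + u) ^ 2) ^ (i - 1) = (1 + u) ^ (2 * (i - 1)) from (pow_mul _ 2 (i - 1)).symm,
        show 2 * (i - 1) = (i - 1) * 2 from Nat.mul_comm 2 (i - 1), pow_mul]
      ring
    have e2 : ∑ i ∈ Finset.Icc 1 n, ((1 + u) ^ 2) ^ (i - 1)
        = (((1 + u) ^ 2) ^ n - 1) / ((1 + u) ^ 2 - 1) := by
      rw [aux_gsum]
      exact geom_sum_eq (ne_of_gt (by nlinarith : (1:ℝ) < (1 + u) ^ 2)) n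
    have e3 : ((1 + u) ^ 2) ^ n = (1 + u) ^ (2 * n) := (pow_mul _ 2 n).symm
    rw [e1, e2, e3]
    have hden : ((1:ℝ) + u) ^ 2 - 1 = u * (2 + u) := by ring
    rw [hden, ← hγdef]
    calc 2 * (Kz ^ 2 * u ^ 2 * (γ / (u * (2 + u))))
        = Kz ^ 2 * (u * γ) * (2 / (2 + u)) := by
          field_simp
      _ ≤ Kz ^ 2 * (u * γ) * 1 := by
          refine mul_le_mul_of_nonneg_left ?_ (by positivity)
          rw [div_le_one (by linarith)]; linarith
      _ = Kz ^ 2 * (u * γ) := mul_one _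
  have hexp : Real.exp (-ε ^ 2 / (2 * V)) ≤ lam / 2 := by
    have hε2 : ε ^ 2 = Kz ^ 2 * (u * γ) * Real.log (2 / lam) := by
      rw [hεdef, mul_pow, mul_pow, Real.sq_sqrt (by positivity), Real.sq_sqrt hL.le]
    have hq : Real.log (2 / lam) ≤ ε ^ 2 / (2 * V) := by
      have h1 : ε ^ 2 / (Kz ^ 2 * (u * γ)) = Real.log (2 / lam) := by
        rw [hε2]; field_simp
      rw [← h1]
      exact div_le_div_of_nonneg_left (by positivity) (by linarith) hVle
    have hmono : Real.exp (-ε ^ 2 / (2 * V)) ≤ Real.exp (-Real.log (2 / lam)) := by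
      apply Real.exp_le_exp.mpr
      rw [neg_div]
      exact neg_le_neg hq
    refine hmono.trans (le_of_eq ?_)
    rw [Real.exp_neg, Real.exp_log (by positivity), inv_div]
  -- assemble
  have hMnΨ : M n = Ψ := funext fun ω => by simp [hM]
  have hΨm : StronglyMeasurable Ψ := hMnΨ ▸ ((hmeasM n le_rfl).mono (F.le n))
  have hup' : (μ {ω | ε ≤ Ψ ω}).toReal ≤ lam / 2 := by
    have h2 := hup.trans hexp
    rw [hMnΨ] at h2
    exact h2
  have hlo' : (μ {ω | ε ≤ -Ψ ω}).toReal ≤ lam / 2 := by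
    have h2 := hlo.trans hexp
    beta_reduce at h2
    rw [hMnΨ] at h2
    exact h2
  set G := {ω | |Ψ ω| ≤ ε} with hG
  have hGm : MeasurableSet G := measurableSet_le hΨm.measurable.abs measurable_const
  have hsubset : Gᶜ ⊆ {ω | ε ≤ Ψ ω} ∪ {ω | ε ≤ -Ψ ω} := by
    intro ω hω
    simp only [hG, Set.mem_compl_iff, Set.mem_setOf_eq, not_le] at hω
    simp only [Set.mem_union, Set.mem_setOf_eq]
    rcases abs_cases (Ψ ω) with ⟨he, _⟩ | ⟨he, _⟩
    · left; rw [he] at hω; exact hω.le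
    · right; rw [he] at hω; exact hω.le
  have hcompl : (μ Gᶜ).toReal ≤ lam := by
    calc (μ Gᶜ).toReal ≤ (μ ({ω | ε ≤ Ψ ω} ∪ {ω | ε ≤ -Ψ ω})).toReal :=
        ENNReal.toReal_mono (measure_ne_top μ _) (measure_mono hsubset)
      _ ≤ ((μ {ω | ε ≤ Ψ ω}) + (μ {ω | ε ≤ -Ψ ω})).toReal :=
        ENNReal.toReal_mono
          (ENNReal.add_ne_top.mpr ⟨measure_ne_top μ _, measure_ne_top μ _⟩)
          (measure_union_le _ _)
      _ = (μ {ω | ε ≤ Ψ ω}).toReal + (μ {ω | ε ≤ -Ψ ω}).toReal :=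
        ENNReal.toReal_add (measure_ne_top μ _) (measure_ne_top μ _)
      _ ≤ lam / 2 + lam / 2 := add_le_add hup' hlo'
      _ = lam := by ring
  have htotal : (μ G).toReal + (μ Gᶜ).toReal = 1 := by
    rw [← ENNReal.toReal_add (measure_ne_top μ _) (measure_ne_top μ _),
      measure_add_measure_compl hGm, measure_univ, ENNReal.toReal_one]
  have hfinal : 1 - lam ≤ (μ G).toReal := by linarith
  have hgoal : {ω | |Ψ ω| ≤
      Kz * Real.sqrt (u * ((1 + u) ^ (2 * (m - 1)) - 1)) * Real.sqrt (Real.log (2 / lam))}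
      = G := by
    rw [hG, hεdef, hγdef, hm1]
  rw [hgoal]
  exact ENNReal.ofReal_le_of_le_toReal hfinal
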